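/- Let h and m be positive definite Hermitian matrices (viewed via their quadratic forms) such that |⟨u, Mu'⟩ − ⟨u, Hu'⟩| ≤ ε·√(⟨u,Hu⟩·⟨u',Mu'⟩) for all u, u'. Then |⟨u, M^{1/2}u'⟩ − ⟨u, H^{1/2}u'⟩| ≤ (ε/2)·√(⟨u,H^{1/2}u⟩·⟨u',M^{1/2}u'⟩) for all u, u'. -/

import Mathlib

open scoped InnerProductSpace

section AuxSqrtPerturb
section integrals
open MeasureTheory
open MeasureTheory

lemma int_rpow_inv {s : ℝ} (hs : 0 < s) : ∫ t in (0:ℝ)..1, t ^ (s - 1) = 1 / s := by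
  rw [integral_rpow (Or.inl (by linarith))]
  rw [Real.zero_rpow (by linarith : s - 1 + 1 ≠ 0)]
  norm_num

lemma int_prod {p q : ℝ} (hp : 0 < p) (hq : 0 < q) :
    ∫ t in (0:ℝ)..1, t ^ (p - 1/2) * t ^ (q - 1/2) = 1 / (p + q) := by
  rw [← int_rpow_inv (by linarith : 0 < p + q)]
  apply intervalIntegral.integral_congr_ae
  filter_upwards with t ht
  rw [Set.uIoc_of_le (by norm_num : (0:ℝ) ≤ 1)] at ht
  rw [← Real.rpow_add ht.1]
  congr 1; ring

lemma sum_integral' {ι : Type*} [Fintype ι] (f : ι → ℝ → ℝ)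
    (hint : ∀ k, IntervalIntegrable (f k) volume 0 1) :
    (∫ t in (0:ℝ)..1, ∑ k, f k t) = ∑ k, ∫ t in (0:ℝ)..1, f k t :=
  intervalIntegral.integral_finset_sum (fun k _ => hint k)

lemma sq_sum_integral {ι : Type*} [Fintype ι] (φ : ι → ℝ → ℝ)
    (hint : ∀ k l, IntervalIntegrable (fun t => φ k t * φ l t) volume 0 1) :
    (∫ t in (0:ℝ)..1, (∑ k, φ k t) ^ 2) = ∑ k, ∑ l, ∫ t in (0:ℝ)..1, φ k t * φ l t := by
  have hk : ∀ k, IntervalIntegrable (fun t => ∑ l, φ k t * φ l t) volume 0 1 := by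
    intro k
    have := IntervalIntegrable.sum (μ := volume) (a := 0) (b := 1) Finset.univ
      (f := fun l => fun t => φ k t * φ l t) (fun l _ => hint k l)
    convert this using 2
    · rfl
    simp [Finset.sum_apply]
  have expand : ∀ t : ℝ, (∑ k, φ k t) ^ 2 = ∑ k, ∑ l, φ k t * φ l t := by
    intro t; rw [sq, Finset.sum_mul_sum]
  have e1 : (∫ t in (0:ℝ)..1, (∑ k, φ k t) ^ 2)
      = ∫ t in (0:ℝ)..1, ∑ k, ∑ l, φ k t * φ l t :=
    intervalIntegral.integral_congr (fun t _ => expand t)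
  rw [e1, sum_integral' (fun k t => ∑ l, φ k t * φ l t) hk]
  exact Finset.sum_congr rfl fun k _ => sum_integral' (fun l t => φ k t * φ l t) (hint k)

lemma cauchy_like_posSemidef {ι : Type*} [Fintype ι] [DecidableEq ι]
    (c : ι → ℝ) (hc : ∀ k, 0 < c k) :
    Matrix.PosSemidef (Matrix.of fun k l => Real.sqrt (c k * c l) / (c k + c l)) := by
  rw [Matrix.posSemidef_iff_dotProduct_mulVec]
  constructor
  · ext k l
    simp [Matrix.conjTranspose_apply, mul_comm, add_comm]
  · intro x
    have hint : ∀ k l : ι, IntervalIntegrable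
        (fun t => (x k * Real.sqrt (c k) * t ^ (c k - 1/2))
          * (x l * Real.sqrt (c l) * t ^ (c l - 1/2))) volume 0 1 := by
      intro k l
      have base : IntervalIntegrable
          (fun t => (x k * Real.sqrt (c k) * (x l * Real.sqrt (c l))) * t ^ (c k + c l - 1))
          volume 0 1 :=
        (intervalIntegral.intervalIntegrable_rpow'
          (by have := hc k; have := hc l; linarith)).const_mul _
      refine base.congr ?_
      have hmem : ∀ᵐ t ∂(volume.restrict (Set.uIoc (0:ℝ) 1)), t ∈ Set.uIoc (0:ℝ) 1 :=
        ae_restrict_mem measurableSet_uIoc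
      intro t ht
      rw [Set.uIoc_of_le (by norm_num : (0:ℝ) ≤ 1)] at ht
      beta_reduce
      rw [show c k + c l - 1 = (c k - 1/2) + (c l - 1/2) by ring, Real.rpow_add ht.1]
      ring
    have term : ∀ k l : ι,
        (∫ t in (0:ℝ)..1, (x k * Real.sqrt (c k) * t ^ (c k - 1/2))
          * (x l * Real.sqrt (c l) * t ^ (c l - 1/2)))
        = x k * (Real.sqrt (c k * c l) / (c k + c l) * x l) := by
      intro k l
      have : (fun t => (x k * Real.sqrt (c k) * t ^ (c k - 1/2))
          * (x l * Real.sqrt (c l) * t ^ (c l - 1/2)))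
          = fun t => (x k * Real.sqrt (c k) * (x l * Real.sqrt (c l)))
            * (t ^ (c k - 1/2) * t ^ (c l - 1/2)) := by
        funext t; ring
      rw [this, intervalIntegral.integral_const_mul, int_prod (hc k) (hc l),
        Real.sqrt_mul (le_of_lt (hc k))]
      ring
    have key : dotProduct (star x) ((Matrix.of fun k l =>
        Real.sqrt (c k * c l) / (c k + c l)).mulVec x)
        = ∫ t in (0:ℝ)..1, (∑ k, x k * Real.sqrt (c k) * t ^ (c k - 1/2)) ^ 2 := by
      rw [sq_sum_integral (fun k t => x k * Real.sqrt (c k) * t ^ (c k - 1/2)) hint]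
      simp_rw [term]
      simp [dotProduct, Matrix.mulVec, Finset.mul_sum]
    rw [key]
    exact intervalIntegral.integral_nonneg (by norm_num) (fun t _ => sq_nonneg _)

open scoped MatrixOrder in
lemma gram_exists {n m : ℕ} (a : Fin n → ℝ) (b : Fin m → ℝ)
    (ha : ∀ i, 0 < a i) (hb : ∀ j, 0 < b j) :
    ∃ (g : Fin n → (Fin n ⊕ Fin m) → ℝ) (h : Fin m → (Fin n ⊕ Fin m) → ℝ),
      (∀ i j, ∑ r, g i r * h j r = Real.sqrt (a i * b j) / (a i + b j)) ∧
      (∀ i, ∑ r, (g i r) ^ 2 = 1/2) ∧ (∀ j, ∑ r, (h j r) ^ 2 = 1/2) := by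
  set c : Fin n ⊕ Fin m → ℝ := Sum.elim a b with hc
  have hcpos : ∀ k, 0 < c k := by rintro (i | j) <;> simp [hc, ha, hb]
  set P : Matrix (Fin n ⊕ Fin m) (Fin n ⊕ Fin m) ℝ :=
    Matrix.of fun k l => Real.sqrt (c k * c l) / (c k + c l) with hP
  have hPsd : P.PosSemidef := cauchy_like_posSemidef c hcpos
  set G := CFC.sqrt P with hG
  have hGG : G * G = P := CFC.sqrt_mul_sqrt_self P hPsd.nonneg
  have hGsym : ∀ k l, G k l = G l k := by
    intro k l
    have h1 : G.conjTranspose = G := (Matrix.nonneg_iff_posSemidef.mp (CFC.sqrt_nonneg P)).1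
    calc G k l = G.conjTranspose k l := by rw [h1]
    _ = G l k := by simp [Matrix.conjTranspose_apply]
  have hmul : ∀ k l, ∑ r, G k r * G l r = P k l := by
    intro k l
    have : (G * G) k l = P k l := by rw [hGG]
    rw [← this, Matrix.mul_apply]
    exact Finset.sum_congr rfl fun r _ => by rw [hGsym l r]
  refine ⟨fun i r => G (.inl i) r, fun j r => G (.inr j) r, ?_, ?_, ?_⟩
  · intro i j
    rw [hmul (.inl i) (.inr j)]
    simp [hP, hc]
  · intro i
    have := hmul (.inl i) (.inl i)
    simp only [← sq] at this
    rw [this]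
    have hai := ha i
    simp only [hP, hc, Matrix.of_apply, Sum.elim_inl,
      Real.sqrt_mul_self (le_of_lt hai)]
    field_simp
    ring
  · intro j
    have := hmul (.inr j) (.inr j)
    simp only [← sq] at this
    rw [this]
    have hbj := hb j
    simp only [hP, hc, Matrix.of_apply, Sum.elim_inr,
      Real.sqrt_mul_self (le_of_lt hbj)]
    field_simp
    ring

end integrals
section helpers
variable {E : Type*} [NormedAddCommGroup E] [InnerProductSpace ℂ E]

lemma inner_sum_expand {n m : ℕ}
    (S : E →L[ℂ] E) (c : Fin n → E) (d : Fin m → E) (φ : Fin n → ℂ) (ψ : Fin m → ℂ) :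
    ⟪∑ i, φ i • c i, S (∑ j, ψ j • d j)⟫_ℂ
      = ∑ i, ∑ j, (starRingEnd ℂ) (φ i) * ψ j * ⟪c i, S (d j)⟫_ℂ := by
  rw [map_sum, sum_inner]
  refine Finset.sum_congr rfl fun i _ => ?_
  rw [inner_smul_left, inner_sum, Finset.mul_sum]
  refine Finset.sum_congr rfl fun j _ => ?_
  rw [map_smul, inner_smul_right]; ring

lemma quad_form_re {n : ℕ} (e : OrthonormalBasis (Fin n) ℂ E)
    (S : E →L[ℂ] E) (μ : Fin n → ℝ) (hSe : ∀ i, S (e i) = (μ i : ℂ) • e i)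
    (φ : Fin n → ℂ) :
    (⟪∑ i, φ i • e i, S (∑ i, φ i • e i)⟫_ℂ).re
      = ∑ i, μ i * Complex.normSq (φ i) := by
  rw [inner_sum_expand]
  have horth := orthonormal_iff_ite.mp e.orthonormal
  have : ∀ i : Fin n, ∑ j, (starRingEnd ℂ) (φ i) * φ j * ⟪e i, S (e j)⟫_ℂ
      = ((μ i * Complex.normSq (φ i) : ℝ) : ℂ) := by
    intro i
    rw [Finset.sum_eq_single i]
    · rw [hSe i, inner_smul_right, horth i i]
      simp only [if_pos rfl, mul_one]
      rw [mul_comm ((starRingEnd ℂ) (φ i)) (φ i), Complex.mul_conj]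
      push_cast
      ring
    · intro j _ hj
      rw [hSe j, inner_smul_right, horth i j, if_neg (fun hij => hj hij.symm)]
      ring
    · intro h; exact absurd (Finset.mem_univ i) h
  rw [Finset.sum_congr rfl fun i _ => this i]
  rw [← Complex.ofReal_sum]
  exact Complex.ofReal_re _

end helpers
end AuxSqrtPerturb

/-- A relative form bound between `M` and `H` with constant `ε` implies the same type of
bound between `M^{1/2}` and `H^{1/2}` with constant `ε/2`.  The square roots are
characterized as the unique positive square roots `sH`, `sM`. -/
theorem sqrt_form_perturbation_bound
    {E : Type*} [NormedAddCommGroup E] [InnerProductSpace ℂ E] [FiniteDimensional ℂ E]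
    (H M sH sM : E →L[ℂ] E) (ε : ℝ) (hε : 0 ≤ ε)
    (hH : IsSelfAdjoint H) (hHpos : ∀ v : E, v ≠ 0 → 0 < (⟪H v, v⟫_ℂ).re)
    (hM : IsSelfAdjoint M) (hMpos : ∀ v : E, v ≠ 0 → 0 < (⟪M v, v⟫_ℂ).re)
    (hsH : IsSelfAdjoint sH) (hsH_pos : ∀ v : E, v ≠ 0 → 0 < (⟪sH v, v⟫_ℂ).re)
    (hsH_sq : sH * sH = H)
    (hsM : IsSelfAdjoint sM) (hsM_pos : ∀ v : E, v ≠ 0 → 0 < (⟪sM v, v⟫_ℂ).re)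
    (hsM_sq : sM * sM = M)
    (hform : ∀ u u' : E, ‖⟪u, M u'⟫_ℂ - ⟪u, H u'⟫_ℂ‖
        ≤ ε * Real.sqrt ((⟪u, H u⟫_ℂ).re * (⟪u', M u'⟫_ℂ).re)) :
    ∀ u u' : E, ‖⟪u, sM u'⟫_ℂ - ⟪u, sH u'⟫_ℂ‖
        ≤ (ε / 2) * Real.sqrt ((⟪u, sH u⟫_ℂ).re * (⟪u', sM u'⟫_ℂ).re) := by
  intro u u'
  classical
  have hsHsym := ContinuousLinearMap.isSelfAdjoint_iff_isSymmetric.mp hsH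
  have hsMsym := ContinuousLinearMap.isSelfAdjoint_iff_isSymmetric.mp hsM
  have hHsym := ContinuousLinearMap.isSelfAdjoint_iff_isSymmetric.mp hH
  set n := Module.finrank ℂ E with hn
  have hn' : Module.finrank ℂ E = n := rfl
  set e : OrthonormalBasis (Fin n) ℂ E := hsHsym.eigenvectorBasis hn' with he
  set f : OrthonormalBasis (Fin n) ℂ E := hsMsym.eigenvectorBasis hn' with hf
  set a : Fin n → ℝ := hsHsym.eigenvalues hn' with ha
  set b : Fin n → ℝ := hsMsym.eigenvalues hn' with hb
  have hae : ∀ i, sH (e i) = ((a i : ℂ)) • e i := fun i =>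
    hsHsym.apply_eigenvectorBasis hn' i
  have hbf : ∀ j, sM (f j) = ((b j : ℂ)) • f j := fun j =>
    hsMsym.apply_eigenvectorBasis hn' j
  -- positivity of eigenvalues
  have hapos : ∀ i, 0 < a i := by
    intro i
    have hne : e i ≠ 0 := e.orthonormal.ne_zero i
    have h1 : ‖e i‖ = 1 := e.orthonormal.1 i
    have := hsH_pos (e i) hne
    rw [hae i, inner_smul_left] at this
    simpa [inner_self_eq_norm_sq_to_K, h1, Complex.conj_ofReal] using this
  have hbpos : ∀ j, 0 < b j := by
    intro j
    have hne : f j ≠ 0 := f.orthonormal.ne_zero j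
    have h1 : ‖f j‖ = 1 := f.orthonormal.1 j
    have := hsM_pos (f j) hne
    rw [hbf j, inner_smul_left] at this
    simpa [inner_self_eq_norm_sq_to_K, h1, Complex.conj_ofReal] using this
  -- squared eigenrelations
  have hHe : ∀ i, H (e i) = ((a i : ℂ)^2) • e i := by
    intro i
    rw [← hsH_sq, ContinuousLinearMap.mul_apply, hae, map_smul, hae, smul_smul, sq]
  have hMf : ∀ j, M (f j) = ((b j : ℂ)^2) • f j := by
    intro j
    rw [← hsM_sq, ContinuousLinearMap.mul_apply, hbf, map_smul, hbf, smul_smul, sq]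
  -- matrix entries
  have hD : ∀ i j, ⟪e i, sM (f j)⟫_ℂ - ⟪e i, sH (f j)⟫_ℂ
      = ((b j : ℂ) - (a i : ℂ)) * ⟪e i, f j⟫_ℂ := by
    intro i j
    have hsym := hsHsym (e i) (f j)
    simp only [ContinuousLinearMap.coe_coe] at hsym
    rw [hbf j, inner_smul_right, ← hsym, hae i, inner_smul_left,
      Complex.conj_ofReal]
    ring
  have hT : ∀ i j, ⟪e i, M (f j)⟫_ℂ - ⟪e i, H (f j)⟫_ℂ
      = (((b j : ℂ))^2 - ((a i : ℂ))^2) * ⟪e i, f j⟫_ℂ := by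
    intro i j
    have hsym := hHsym (e i) (f j)
    simp only [ContinuousLinearMap.coe_coe] at hsym
    rw [hMf j, inner_smul_right, ← hsym, hHe i, inner_smul_left]
    rw [map_pow, Complex.conj_ofReal]
    ring
  -- Gram decomposition
  obtain ⟨g, h, hgh, hgg, hhh⟩ := gram_exists a b hapos hbpos
  set x : Fin n → ℂ := fun i => e.repr u i with hx
  set y : Fin n → ℂ := fun j => f.repr u' j with hy
  set α : Fin n → (Fin n ⊕ Fin n) → ℂ :=
    fun i r => x i * ((g i r / Real.sqrt (a i) : ℝ) : ℂ) with hα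
  set β : Fin n → (Fin n ⊕ Fin n) → ℂ :=
    fun j r => y j * ((h j r / Real.sqrt (b j) : ℝ) : ℂ) with hβ
  set v : (Fin n ⊕ Fin n) → E := fun r => ∑ i, α i r • e i with hv
  set w : (Fin n ⊕ Fin n) → E := fun r => ∑ j, β j r • f j with hw
  have hu : u = ∑ i, x i • e i := (e.sum_repr u).symm
  have hu' : u' = ∑ j, y j • f j := (f.sum_repr u').symm
  have step1 : ⟪u, sM u'⟫_ℂ - ⟪u, sH u'⟫_ℂ
      = ∑ i, ∑ j, (starRingEnd ℂ) (x i) * y j * (((b j : ℂ) - (a i : ℂ)) * ⟪e i, f j⟫_ℂ) := by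
    conv_lhs => rw [hu, hu']
    rw [inner_sum_expand, inner_sum_expand, ← Finset.sum_sub_distrib]
    refine Finset.sum_congr rfl fun i _ => ?_
    rw [← Finset.sum_sub_distrib]
    refine Finset.sum_congr rfl fun j _ => ?_
    rw [← mul_sub, hD i j]
  have key2 : ∀ i j, (starRingEnd ℂ) (x i) * y j * (((b j : ℂ) - (a i : ℂ)) * ⟪e i, f j⟫_ℂ)
      = ∑ r, (starRingEnd ℂ) (α i r) * β j r
          * ((((b j : ℂ))^2 - ((a i : ℂ))^2) * ⟪e i, f j⟫_ℂ) := by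
    intro i j
    have hsa : Real.sqrt (a i) ≠ 0 := ne_of_gt (Real.sqrt_pos.mpr (hapos i))
    have hsb : Real.sqrt (b j) ≠ 0 := ne_of_gt (Real.sqrt_pos.mpr (hbpos j))
    have habpos : (0:ℝ) < a i + b j := by linarith [hapos i, hbpos j]
    have hsum : (∑ r, (g i r / Real.sqrt (a i)) * (h j r / Real.sqrt (b j)) : ℝ)
        = 1 / (a i + b j) := by
      have e0 : (∑ r, (g i r / Real.sqrt (a i)) * (h j r / Real.sqrt (b j)) : ℝ)
          = (∑ r, g i r * h j r) / (Real.sqrt (a i) * Real.sqrt (b j)) := by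
        rw [Finset.sum_div]; exact Finset.sum_congr rfl fun r _ => by ring
      rw [e0, hgh i j, ← Real.sqrt_mul (le_of_lt (hapos i))]
      have hsab : Real.sqrt (a i * b j) ≠ 0 :=
        ne_of_gt (Real.sqrt_pos.mpr (mul_pos (hapos i) (hbpos j)))
      field_simp
    have expand : ∀ r : Fin n ⊕ Fin n, (starRingEnd ℂ) (α i r) * β j r
        = (((g i r / Real.sqrt (a i)) * (h j r / Real.sqrt (b j)) : ℝ) : ℂ)
          * ((starRingEnd ℂ) (x i) * y j) := by
      intro r
      simp only [hα, hβ, map_mul, Complex.conj_ofReal]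
      push_cast
      ring
    have e1 : (∑ r, (starRingEnd ℂ) (α i r) * β j r)
        = ((1 / (a i + b j) : ℝ) : ℂ) * ((starRingEnd ℂ) (x i) * y j) := by
      rw [Finset.sum_congr rfl (fun r _ => expand r), ← Finset.sum_mul,
        ← Complex.ofReal_sum, hsum]
    rw [← Finset.sum_mul, e1]
    have hab : ((a i : ℂ) + (b j : ℂ)) ≠ 0 := by
      rw [← Complex.ofReal_add]
      exact Complex.ofReal_ne_zero.mpr (ne_of_gt habpos)
    push_cast
    field_simp
    ring
  have step2 : ⟪u, sM u'⟫_ℂ - ⟪u, sH u'⟫_ℂ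
      = ∑ r, (⟪v r, M (w r)⟫_ℂ - ⟪v r, H (w r)⟫_ℂ) := by
    have hrw : ∀ r, ⟪v r, M (w r)⟫_ℂ - ⟪v r, H (w r)⟫_ℂ
        = ∑ i, ∑ j, (starRingEnd ℂ) (α i r) * β j r
            * ((((b j : ℂ))^2 - ((a i : ℂ))^2) * ⟪e i, f j⟫_ℂ) := by
      intro r
      rw [hv, hw]
      rw [inner_sum_expand, inner_sum_expand, ← Finset.sum_sub_distrib]
      refine Finset.sum_congr rfl fun i _ => ?_
      rw [← Finset.sum_sub_distrib]
      refine Finset.sum_congr rfl fun j _ => ?_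
      rw [← mul_sub, hT i j]
    rw [Finset.sum_congr rfl fun r _ => hrw r, step1]
    conv_rhs => rw [Finset.sum_comm]
    refine Finset.sum_congr rfl fun i _ => ?_
    conv_rhs => rw [Finset.sum_comm]
    exact Finset.sum_congr rfl fun j _ => key2 i j
  -- quadratic forms
  have hvH : ∀ r, (⟪v r, H (v r)⟫_ℂ).re = ∑ i, ((a i)^2) * Complex.normSq (α i r) := by
    intro r
    rw [hv]
    exact quad_form_re e H (fun i => (a i)^2)
      (fun i => by rw [hHe i]; norm_cast) (fun i => α i r)
  have hwM : ∀ r, (⟪w r, M (w r)⟫_ℂ).re = ∑ j, ((b j)^2) * Complex.normSq (β j r) := by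
    intro r
    rw [hw]
    exact quad_form_re f M (fun j => (b j)^2)
      (fun j => by rw [hMf j]; norm_cast) (fun j => β j r)
  have hX : (⟪u, sH u⟫_ℂ).re = ∑ i, a i * Complex.normSq (x i) := by
    conv_lhs => rw [hu]
    exact quad_form_re e sH a hae x
  have hY : (⟪u', sM u'⟫_ℂ).re = ∑ j, b j * Complex.normSq (y j) := by
    conv_lhs => rw [hu']
    exact quad_form_re f sM b hbf y
  have hα2 : ∀ i r, ((a i)^2) * Complex.normSq (α i r)
      = a i * (g i r)^2 * Complex.normSq (x i) := by
    intro i r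
    have hai := hapos i
    have hs : Real.sqrt (a i) * Real.sqrt (a i) = a i := Real.mul_self_sqrt (le_of_lt hai)
    simp only [hα, Complex.normSq_mul, Complex.normSq_ofReal]
    have h2 : g i r / Real.sqrt (a i) * (g i r / Real.sqrt (a i)) = (g i r)^2 / (a i) := by
      rw [div_mul_div_comm, hs, sq]
    rw [h2]
    field_simp
  have hβ2 : ∀ j r, ((b j)^2) * Complex.normSq (β j r)
      = b j * (h j r)^2 * Complex.normSq (y j) := by
    intro j r
    have hbj := hbpos j
    have hs : Real.sqrt (b j) * Real.sqrt (b j) = b j := Real.mul_self_sqrt (le_of_lt hbj)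
    simp only [hβ, Complex.normSq_mul, Complex.normSq_ofReal]
    have h2 : h j r / Real.sqrt (b j) * (h j r / Real.sqrt (b j)) = (h j r)^2 / (b j) := by
      rw [div_mul_div_comm, hs, sq]
    rw [h2]
    field_simp
  set P : (Fin n ⊕ Fin n) → ℝ := fun r => ∑ i, a i * (g i r)^2 * Complex.normSq (x i)
    with hPdef
  set Q : (Fin n ⊕ Fin n) → ℝ := fun r => ∑ j, b j * (h j r)^2 * Complex.normSq (y j)
    with hQdef
  have hPnn : ∀ r, 0 ≤ P r := fun r => Finset.sum_nonneg fun i _ =>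
    mul_nonneg (mul_nonneg (le_of_lt (hapos i)) (sq_nonneg _)) (Complex.normSq_nonneg _)
  have hQnn : ∀ r, 0 ≤ Q r := fun r => Finset.sum_nonneg fun j _ =>
    mul_nonneg (mul_nonneg (le_of_lt (hbpos j)) (sq_nonneg _)) (Complex.normSq_nonneg _)
  have hvHP : ∀ r, (⟪v r, H (v r)⟫_ℂ).re = P r := by
    intro r; rw [hvH r, hPdef]
    exact Finset.sum_congr rfl fun i _ => hα2 i r
  have hwMQ : ∀ r, (⟪w r, M (w r)⟫_ℂ).re = Q r := by
    intro r; rw [hwM r, hQdef]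
    exact Finset.sum_congr rfl fun j _ => hβ2 j r
  have hbound : ∀ r, ‖⟪v r, M (w r)⟫_ℂ - ⟪v r, H (w r)⟫_ℂ‖
      ≤ ε * (Real.sqrt (P r) * Real.sqrt (Q r)) := by
    intro r
    have hfr := hform (v r) (w r)
    rw [hvHP r, hwMQ r, Real.sqrt_mul (hPnn r)] at hfr
    exact hfr
  have hsumP : ∑ r, P r = (1/2) * ∑ i, a i * Complex.normSq (x i) := by
    rw [hPdef]
    calc (∑ r, ∑ i, a i * (g i r)^2 * Complex.normSq (x i))
        = ∑ i, ∑ r : Fin n ⊕ Fin n, a i * (g i r)^2 * Complex.normSq (x i) :=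
          Finset.sum_comm
      _ = ∑ i, (a i * Complex.normSq (x i)) * ∑ r, (g i r)^2 := by
          refine Finset.sum_congr rfl fun i _ => ?_
          rw [Finset.mul_sum]
          exact Finset.sum_congr rfl fun r _ => by ring
      _ = (1/2) * ∑ i, a i * Complex.normSq (x i) := by
          rw [Finset.mul_sum]
          refine Finset.sum_congr rfl fun i _ => ?_
          rw [hgg i]; ring
  have hsumQ : ∑ r, Q r = (1/2) * ∑ j, b j * Complex.normSq (y j) := by
    rw [hQdef]
    calc (∑ r, ∑ j, b j * (h j r)^2 * Complex.normSq (y j))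
        = ∑ j, ∑ r : Fin n ⊕ Fin n, b j * (h j r)^2 * Complex.normSq (y j) :=
          Finset.sum_comm
      _ = ∑ j, (b j * Complex.normSq (y j)) * ∑ r, (h j r)^2 := by
          refine Finset.sum_congr rfl fun j _ => ?_
          rw [Finset.mul_sum]
          exact Finset.sum_congr rfl fun r _ => by ring
      _ = (1/2) * ∑ j, b j * Complex.normSq (y j) := by
          rw [Finset.mul_sum]
          refine Finset.sum_congr rfl fun j _ => ?_
          rw [hhh j]; ring
  have hXnn : 0 ≤ ∑ i, a i * Complex.normSq (x i) := Finset.sum_nonneg fun i _ =>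
    mul_nonneg (le_of_lt (hapos i)) (Complex.normSq_nonneg _)
  have hYnn : 0 ≤ ∑ j, b j * Complex.normSq (y j) := Finset.sum_nonneg fun j _ =>
    mul_nonneg (le_of_lt (hbpos j)) (Complex.normSq_nonneg _)
  calc ‖⟪u, sM u'⟫_ℂ - ⟪u, sH u'⟫_ℂ‖
      = ‖∑ r, (⟪v r, M (w r)⟫_ℂ - ⟪v r, H (w r)⟫_ℂ)‖ := by rw [step2]
    _ ≤ ∑ r, ‖⟪v r, M (w r)⟫_ℂ - ⟪v r, H (w r)⟫_ℂ‖ := norm_sum_le _ _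
    _ ≤ ∑ r, ε * (Real.sqrt (P r) * Real.sqrt (Q r)) :=
        Finset.sum_le_sum fun r _ => hbound r
    _ = ε * ∑ r, Real.sqrt (P r) * Real.sqrt (Q r) := by rw [Finset.mul_sum]
    _ ≤ ε * (Real.sqrt (∑ r, P r) * Real.sqrt (∑ r, Q r)) :=
        mul_le_mul_of_nonneg_left (Real.sum_sqrt_mul_sqrt_le _ hPnn hQnn) hε
    _ = (ε / 2) * Real.sqrt ((⟪u, sH u⟫_ℂ).re * (⟪u', sM u'⟫_ℂ).re) := by
        rw [hsumP, hsumQ, hX, hY]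
        rw [← Real.sqrt_mul (by positivity)]
        rw [show (1/2 * ∑ i, a i * Complex.normSq (x i))
            * (1/2 * ∑ j, b j * Complex.normSq (y j))
            = ((∑ i, a i * Complex.normSq (x i)) * ∑ j, b j * Complex.normSq (y j)) / 4
            by ring]
        rw [Real.sqrt_div (mul_nonneg hXnn hYnn)]
        rw [show Real.sqrt 4 = 2 by
          rw [show (4:ℝ) = 2^2 by norm_num, Real.sqrt_sq (by norm_num : (0:ℝ) ≤ 2)]]
        ring
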